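/- With the same quintic polynomial p as determined by cell averages f_{i+ℓ} of p and h_{i+ℓ} of p' over three consecutive intervals (ℓ = -1, 0, 1), the derivative at the right interface satisfies p'(x_i + Δx/2) = (1/(4Δx))(f_{i-1} − 8 f_i + 7 f_{i+1}) + (1/12)(h_{i-1} − 2 h_i − 5 h_{i+1}). -/

import Mathlib

open intervalIntegral

private lemma key_int (c0 c1 c2 c3 c4 c5 a b : ℝ) :
    ∫ x in a..b, (c0 + c1*x + c2*x^2 + c3*x^3 + c4*x^4 + c5*x^5) =
      (c0*b + c1*b^2/2 + c2*b^3/3 + c3*b^4/4 + c4*b^5/5 + c5*b^6/6)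
      - (c0*a + c1*a^2/2 + c2*a^3/3 + c3*a^4/4 + c4*a^5/5 + c5*a^6/6) := by
  have h : ∀ x : ℝ, HasDerivAt
      (fun x : ℝ => c0*x + c1*x^2/2 + c2*x^3/3 + c3*x^4/4 + c4*x^5/5 + c5*x^6/6)
      (c0 + c1*x + c2*x^2 + c3*x^3 + c4*x^4 + c5*x^5) x := by
    intro x
    have h1 := (((hasDerivAt_id x).const_mul c0).add
      ((((hasDerivAt_pow 2 x).const_mul c1).div_const 2).add
      ((((hasDerivAt_pow 3 x).const_mul c2).div_const 3).add
      ((((hasDerivAt_pow 4 x).const_mul c3).div_const 4).add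
      ((((hasDerivAt_pow 5 x).const_mul c4).div_const 5).add
      (((hasDerivAt_pow 6 x).const_mul c5).div_const 6))))))
    convert h1 using 1
    · rfl
    · rfl
    · funext y; simp [id]; ring
    · push_cast; ring
  rw [intervalIntegral.integral_eq_sub_of_hasDerivAt (fun x _ => h x)
    (Continuous.intervalIntegrable (by fun_prop) a b)]

set_option maxHeartbeats 1000000 in
theorem stmt_3 (Δx xi fim1 fi fip1 him1 hi hip1 : ℝ) (hΔ : 0 < Δx)
    (p : Polynomial ℝ) (hdeg : p.natDegree ≤ 5)
    (hf1 : (1 / Δx) * ∫ x in ((xi - Δx) - Δx / 2)..((xi - Δx) + Δx / 2), p.eval x = fim1)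
    (hf2 : (1 / Δx) * ∫ x in (xi - Δx / 2)..(xi + Δx / 2), p.eval x = fi)
    (hf3 : (1 / Δx) * ∫ x in ((xi + Δx) - Δx / 2)..((xi + Δx) + Δx / 2), p.eval x = fip1)
    (hh1 : (1 / Δx) * ∫ x in ((xi - Δx) - Δx / 2)..((xi - Δx) + Δx / 2),
        (Polynomial.derivative p).eval x = him1)
    (hh2 : (1 / Δx) * ∫ x in (xi - Δx / 2)..(xi + Δx / 2),
        (Polynomial.derivative p).eval x = hi)
    (hh3 : (1 / Δx) * ∫ x in ((xi + Δx) - Δx / 2)..((xi + Δx) + Δx / 2),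
        (Polynomial.derivative p).eval x = hip1) :
    (Polynomial.derivative p).eval (xi + Δx / 2) =
      (1 / (4 * Δx)) * (fim1 - 8 * fi + 7 * fip1)
        + (1 / 12) * (him1 - 2 * hi - 5 * hip1) := by
  have hΔ' : Δx ≠ 0 := ne_of_gt hΔ
  set a0 := p.coeff 0 with ha0
  set a1 := p.coeff 1 with ha1
  set a2 := p.coeff 2 with ha2
  set a3 := p.coeff 3 with ha3
  set a4 := p.coeff 4 with ha4
  set a5 := p.coeff 5 with ha5
  have hp : ∀ x : ℝ, p.eval x
      = a0 + a1*x + a2*x^2 + a3*x^3 + a4*x^4 + a5*x^5 := by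
    intro x
    rw [Polynomial.eval_eq_sum_range' (n := 6) (lt_of_le_of_lt hdeg (by norm_num)) x]
    simp only [Finset.sum_range_succ, Finset.sum_range_zero, pow_zero, pow_one]
    ring
  have hd4 : (Polynomial.derivative p).natDegree < 5 := by
    have := Polynomial.natDegree_derivative_le p; omega
  have hp' : ∀ x : ℝ, (Polynomial.derivative p).eval x
      = a1 + 2*a2*x + 3*a3*x^2 + 4*a4*x^3 + 5*a5*x^4 := by
    intro x
    rw [Polynomial.eval_eq_sum_range' (n := 5) hd4 x]
    simp only [Finset.sum_range_succ, Finset.sum_range_zero, Polynomial.coeff_derivative,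
      pow_zero, pow_one, ha1, ha2, ha3, ha4, ha5]
    push_cast; ring
  have hderivInt : ∀ a b : ℝ,
      ∫ x in a..b, (Polynomial.derivative p).eval x = p.eval b - p.eval a := fun a b =>
    intervalIntegral.integral_eq_sub_of_hasDerivAt (fun x _ => p.hasDerivAt x)
      ((p.derivative.continuous_aeval).intervalIntegrable a b)
  simp only [hp] at hf1 hf2 hf3
  rw [key_int] at hf1 hf2 hf3
  rw [hderivInt] at hh1 hh2 hh3
  simp only [hp] at hh1 hh2 hh3
  rw [hp']
  subst hf1 hf2 hf3 hh1 hh2 hh3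
  field_simp
  ring
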